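/- Let F be a strong (ω₁,λ)-semimorass. If X, Y ∈ F with X ⊆ Y and rank(X) < α < rank(Y), then there exists Z ∈ F with rank(Z) = α and X ⊆ Z ⊆ Y. -/

import Mathlib

open Set Cardinal

noncomputable section

/-- The ordinal `ω₁`. -/
def omega1O : Ordinal := (Cardinal.aleph 1).ord
/-- The ordinal `ω₂`. -/
def omega2O : Ordinal := (Cardinal.aleph 2).ord

/-- The image of a set of ordinals `W ⊆ X` under an order isomorphism `e : X ≃o Y`. -/
def ordImage {X Y : Set Ordinal} (e : ↥X ≃o ↥Y) (W : Set Ordinal) : Set Ordinal :=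
  {o | ∃ w : ↥X, w.1 ∈ W ∧ (e w).1 = o}

/-- `F↾X = {Y ∈ F : Y ⊊ X}`. -/
def Frestrict (F : Set (Set Ordinal)) (X : Set Ordinal) : Set (Set Ordinal) :=
  {Y ∈ F | Y ⊂ X}

/-- `X = X₁ ⊕ X₂`: same order type, union, and `ρ_{X₁,X₂}` is the identity on `X₁ ∩ X₂`. -/
def Oplus (X X₁ X₂ : Set Ordinal) : Prop :=
  X = X₁ ∪ X₂ ∧ ∃ e : ↥X₁ ≃o ↥X₂, ∀ x : ↥X₁, x.1 ∈ X₂ → (e x).1 = x.1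

/-- `X = X₁ ⊙ X₂`: same order type, union, and `X₁ ∩ X₂ < X₁ \ X₂ < X₂ \ X₁` elementwise. -/
def Odot (X X₁ X₂ : Set Ordinal) : Prop :=
  X = X₁ ∪ X₂ ∧ Nonempty (↥X₁ ≃o ↥X₂) ∧
  (∀ a ∈ X₁ ∩ X₂, ∀ b ∈ X₁ \ X₂, a < b) ∧
  (∀ a ∈ X₁ ∩ X₂, ∀ c ∈ X₂ \ X₁, a < c) ∧
  (∀ b ∈ X₁ \ X₂, ∀ c ∈ X₂ \ X₁, b < c)

/-- `X = X₁ ⊗ X₂`: `X = X₁ ⊕ X₂` and `X ∩ ω₂ = (X₁ ∩ ω₂) ⊙ (X₂ ∩ ω₂)`. -/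
def Otimes (X X₁ X₂ : Set Ordinal) : Prop :=
  Oplus X X₁ X₂ ∧ Odot (X ∩ Iio omega2O) (X₁ ∩ Iio omega2O) (X₂ ∩ Iio omega2O)

/-- `rk` is the rank function of the well-founded relation `⊊` on `F`. -/
def IsRankFn (F : Set (Set Ordinal)) (rk : Set Ordinal → Ordinal) : Prop :=
  ∀ X ∈ F, rk X = sSup ((fun Y => rk Y + 1) '' Frestrict F X)

/-- `F ⊆ [λ]^ω` is a strong `(ω₁,λ)`-semimorass, with rank function `rk`:
(M1) `(F,⊆)` is well-founded (with rank `rk`); (M2) `F` is locally small;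
(M3) `F` is homogeneous; (M4) `F` is directed; (M5) `F` is strongly locally
semidirected; (M6) `F` covers `λ`. -/
def IsStrongSemimorass (lam : Ordinal) (F : Set (Set Ordinal))
    (rk : Set Ordinal → Ordinal) : Prop :=
  (∀ X ∈ F, X ⊆ Iio lam ∧ X.Countable ∧ X.Infinite) ∧
  WellFounded (fun A B : ↥F => A.1 ⊂ B.1) ∧
  IsRankFn F rk ∧
  (∀ X ∈ F, (Frestrict F X).Countable) ∧
  (∀ X ∈ F, ∀ Y ∈ F, rk X = rk Y →
    ∃ e : ↥X ≃o ↥Y, Frestrict F Y = ordImage e '' Frestrict F X) ∧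
  (∀ X ∈ F, ∀ Y ∈ F, ∃ Z ∈ F, X ∪ Y ⊆ Z) ∧
  (∀ X ∈ F, DirectedOn (· ⊆ ·) (Frestrict F X) ∨
    ∃ X₁ ∈ F, ∃ X₂ ∈ F, rk X₁ = rk X₂ ∧ Otimes X X₁ X₂ ∧
      Frestrict F X = Frestrict F X₁ ∪ Frestrict F X₂ ∪ {X₁, X₂}) ∧
  ⋃₀ F = Iio lam

end

/-- Let `F` be a strong `(ω₁,λ)`-semimorass. If `X, Y ∈ F` with `X ⊆ Y` and
`rank X < α < rank Y`, then there is `Z ∈ F` with `rank Z = α` and `X ⊆ Z ⊆ Y`. -/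
theorem stmt5 (lam : Cardinal) (hlam : Cardinal.aleph 1 ≤ lam)
    (F : Set (Set Ordinal)) (rk : Set Ordinal → Ordinal)
    (hF : IsStrongSemimorass lam.ord F rk) :
    ∀ X ∈ F, ∀ Y ∈ F, X ⊆ Y → ∀ α : Ordinal, rk X < α → α < rk Y →
      ∃ Z ∈ F, rk Z = α ∧ X ⊆ Z ∧ Z ⊆ Y := by
  obtain ⟨hsmall, hwf, hrank, hcnt, hhom, hdir, hloc, hcov⟩ := hF
  -- rank is strictly monotone on F
  have hbdd : ∀ B ∈ F, BddAbove ((fun Y => rk Y + 1) '' Frestrict F B) := by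
    intro B hB
    have h := ((hcnt B hB).image (fun Y => rk Y + 1)).to_subtype
    exact Ordinal.bddAbove_of_small
  have hmono : ∀ A ∈ F, ∀ B ∈ F, A ⊂ B → rk A < rk B := by
    intro A hA B hB hAB
    have h1 : rk A + 1 ≤ rk B := by
      rw [hrank B hB]
      exact le_csSup (hbdd B hB) ⟨A, ⟨hA, hAB⟩, rfl⟩
    calc rk A < rk A + 1 := by
          rw [Ordinal.add_one_eq_succ]; exact Order.lt_succ _
      _ ≤ rk B := h1
  have hmono' : ∀ A ∈ F, ∀ B ∈ F, A ⊆ B → rk A ≤ rk B := by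
    intro A hA B hB hAB
    rcases eq_or_ne A B with h | h
    · rw [h]
    · exact (hmono A hA B hB ⟨hAB, fun hh => h (hAB.antisymm hh)⟩).le
  suffices H : ∀ β : Ordinal, ∀ Y ∈ F, rk Y = β → ∀ X ∈ F, X ⊆ Y →
      ∀ α : Ordinal, rk X < α → α < rk Y → ∃ Z ∈ F, rk Z = α ∧ X ⊆ Z ∧ Z ⊆ Y by
    intro X hX Y hY hXY α h1 h2
    exact H (rk Y) Y hY rfl X hX hXY α h1 h2
  intro β
  induction β using Ordinal.induction with
  | h β IH =>
    intro Y hY hYβ X hX hXY α h1 h2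
    subst hYβ
    -- X is a proper subset of Y
    have hXne : X ≠ Y := fun h => by rw [h] at h1; exact absurd h2 (not_lt.mpr h1.le)
    have hXssY : X ⊂ Y := ⟨hXY, fun hh => hXne (hXY.antisymm hh)⟩
    -- find W ⊊ Y with α ≤ rk W
    have hW : ∃ W ∈ Frestrict F Y, α ≤ rk W := by
      by_contra h
      push_neg at h
      have hle : sSup ((fun Y => rk Y + 1) '' Frestrict F Y) ≤ α := by
        apply csSup_le'
        rintro s ⟨W, hWmem, rfl⟩
        have := h W hWmem
        show rk W + 1 ≤ α
        rw [Ordinal.add_one_eq_succ]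
        exact Order.succ_le_of_lt this
      rw [← hrank Y hY] at hle
      exact absurd h2 (not_lt.mpr hle)
    rcases hloc Y hY with hd | ⟨Y₁, hY₁F, Y₂, hY₂F, hrkeq, hot, hFeq⟩
    · -- directed case
      obtain ⟨W, hWmem, hαW⟩ := hW
      obtain ⟨Z', hZ'mem, hXZ', hWZ'⟩ := hd X ⟨hX, hXssY⟩ W hWmem
      obtain ⟨hZ'F, hZ'ssY⟩ := hZ'mem
      obtain ⟨hWF, _⟩ := hWmem
      have hαZ' : α ≤ rk Z' := hαW.trans (hmono' W hWF Z' hZ'F hWZ')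
      rcases eq_or_lt_of_le hαZ' with heq | hlt
      · exact ⟨Z', hZ'F, heq.symm, hXZ', hZ'ssY.subset⟩
      · obtain ⟨Z, hZF, hZrk, hXZ, hZZ'⟩ :=
          IH (rk Z') (hmono Z' hZ'F Y hY hZ'ssY) Z' hZ'F rfl X hX hXZ' α h1 hlt
        exact ⟨Z, hZF, hZrk, hXZ, hZZ'.trans hZ'ssY.subset⟩
    · -- split case: Y = Y₁ ⊗ Y₂
      have hY₁mem : Y₁ ∈ Frestrict F Y := by rw [hFeq]; right; left; rfl
      have hY₂mem : Y₂ ∈ Frestrict F Y := by rw [hFeq]; right; right; rfl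
      have hYun : Y = Y₁ ∪ Y₂ := hot.1.1
      -- rk Y ≤ rk Y₁ + 1
      have hrkle : rk Y ≤ rk Y₁ + 1 := by
        rw [hrank Y hY]
        apply csSup_le'
        rintro s ⟨W, hWmem, rfl⟩
        rw [hFeq] at hWmem
        have hle : rk W ≤ rk Y₁ := by
          rcases hWmem with (⟨hWF, hWss⟩ | ⟨hWF, hWss⟩) | (h | h)
          · exact (hmono W hWF Y₁ hY₁F hWss).le
          · exact (hmono W hWF Y₂ hY₂F hWss).le.trans hrkeq.ge
          · rw [h]
          · rw [h, ← hrkeq]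
        exact add_le_add_left hle 1
      have hαle : α ≤ rk Y₁ := by
        have := lt_of_lt_of_le h2 hrkle
        rw [Ordinal.add_one_eq_succ] at this
        exact Order.lt_succ_iff.mp this
      -- handle X's position
      have hXmem : X ∈ Frestrict F Y := ⟨hX, hXssY⟩
      rw [hFeq] at hXmem
      have key : ∀ Y' , Y' ∈ F → X ⊂ Y' → Y' ⊂ Y → α ≤ rk Y' →
          ∃ Z ∈ F, rk Z = α ∧ X ⊆ Z ∧ Z ⊆ Y := by
        intro Y' hY'F hXY' hY'ss hαY'
        rcases eq_or_lt_of_le hαY' with heq | hlt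
        · exact ⟨Y', hY'F, heq.symm, hXY'.subset, hY'ss.subset⟩
        · obtain ⟨Z, hZF, hZrk, hXZ, hZZ'⟩ :=
            IH (rk Y') (hmono Y' hY'F Y hY hY'ss) Y' hY'F rfl X hX hXY'.subset α h1 hlt
          exact ⟨Z, hZF, hZrk, hXZ, hZZ'.trans hY'ss.subset⟩
      rcases hXmem with (⟨_, hXss⟩ | ⟨_, hXss⟩) | (h | h)
      · exact key Y₁ hY₁F hXss hY₁mem.2 hαle
      · exact key Y₂ hY₂F hXss hY₂mem.2 (hαle.trans_eq hrkeq)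
      · subst h; exact absurd (h1.trans_le hαle) (lt_irrefl _)
      · subst h
        exact absurd (h1.trans_le ((hαle.trans_eq hrkeq))) (lt_irrefl _)
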